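/- Let f : [0,∞) → ℝ solve f'(v) = ½ α(v) − β(v) f(v) with f(0) = 0, where α, β ≥ 0 are continuous, and suppose ∫_0^∞ β ≤ ε. Then for all v, |f(v) − ½ ∫_0^v α| ≤ (e^{2ε} − 1) · ½ ∫_0^v α. -/

import Mathlib

/-- If `f' = ½α − βf`, `f 0 = 0`, with `α, β ≥ 0` continuous and `∫_0^∞ β ≤ ε`, then
`|f v − ½∫_0^v α| ≤ (e^{2ε} − 1) · ½ ∫_0^v α` for all `v ≥ 0`. -/
theorem mass_approximation (f α β : ℝ → ℝ) (ε : ℝ)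
    (hα : Continuous α) (hβ : Continuous β)
    (hαpos : ∀ v, 0 ≤ α v) (hβpos : ∀ v, 0 ≤ β v)
    (hβint : MeasureTheory.IntegrableOn β (Set.Ioi (0:ℝ)))
    (hβsmall : (∫ t in Set.Ioi (0:ℝ), β t) ≤ ε)
    (hf0 : f 0 = 0)
    (hode : ∀ v : ℝ, 0 ≤ v → HasDerivAt f ((1/2) * α v - β v * f v) v) :
    ∀ v : ℝ, 0 ≤ v →
      |f v - (1/2) * ∫ t in (0:ℝ)..v, α t| ≤
        (Real.exp (2 * ε) - 1) * ((1/2) * ∫ t in (0:ℝ)..v, α t) := by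
  intro v hv
  set B : ℝ → ℝ := fun x => ∫ t in (0:ℝ)..x, β t with hBdef
  have hBderiv : ∀ x : ℝ, HasDerivAt B (β x) x := by
    intro x
    exact intervalIntegral.integral_hasDerivAt_right (hβ.intervalIntegrable _ _)
      (hβ.stronglyMeasurableAtFilter _ _) hβ.continuousAt
  have hBcont : Continuous B :=
    continuous_iff_continuousAt.mpr fun x => (hBderiv x).continuousAt
  have hε0 : 0 ≤ ε :=
    le_trans (MeasureTheory.setIntegral_nonneg measurableSet_Ioi (fun t _ => hβpos t)) hβsmall
  -- B is monotone on [0, v] and B v - B t ≤ ε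
  have hBfacts : ∀ t : ℝ, 0 ≤ t → t ≤ v → B t ≤ B v ∧ B v - B t ≤ ε := by
    intro t ht htv
    have heq : B v - B t = ∫ s in t..v, β s := by
      rw [hBdef]
      simp only
      rw [← intervalIntegral.integral_add_adjacent_intervals
        (hβ.intervalIntegrable 0 t) (hβ.intervalIntegrable t v)]
      ring
    have hIoc : (∫ s in t..v, β s) = ∫ s in Set.Ioc t v, β s :=
      intervalIntegral.integral_of_le htv
    have hnonneg : 0 ≤ ∫ s in Set.Ioc t v, β s :=
      MeasureTheory.setIntegral_nonneg measurableSet_Ioc (fun s _ => hβpos s)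
    have hsub : Set.Ioc t v ⊆ Set.Ioi (0:ℝ) := fun x hx => lt_of_le_of_lt ht hx.1
    have hle : (∫ s in Set.Ioc t v, β s) ≤ ∫ s in Set.Ioi (0:ℝ), β s := by
      apply MeasureTheory.setIntegral_mono_set hβint
      · filter_upwards with x using hβpos x
      · exact hsub.eventuallyLE
    constructor
    · linarith [heq, hIoc, hnonneg]
    · linarith [heq, hIoc, hle, hβsmall]
  -- the integrating factor identity
  set G : ℝ → ℝ := fun x => ∫ t in (0:ℝ)..x, Real.exp (B t) * ((1/2) * α t) with hGdef
  have hGcont : Continuous fun t => Real.exp (B t) * ((1/2) * α t) :=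
    (hBcont.rexp).mul (continuous_const.mul hα)
  have hGderiv : ∀ x : ℝ, HasDerivAt G (Real.exp (B x) * ((1/2) * α x)) x := by
    intro x
    exact intervalIntegral.integral_hasDerivAt_right (hGcont.intervalIntegrable _ _)
      (hGcont.stronglyMeasurableAtFilter _ _) hGcont.continuousAt
  set h : ℝ → ℝ := fun x => f x * Real.exp (B x) - G x with hhdef
  have hkey : f v * Real.exp (B v) = G v := by
    have hconst : ∀ x ∈ Set.Icc 0 v, h x = h 0 := by
      apply constant_of_has_deriv_right_zero
      · intro x hx
        have hfx := (hode x hx.1).continuousAt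
        exact ((hfx.continuousWithinAt.mul
          ((hBcont.rexp).continuousWithinAt)).sub
          ((hGderiv x).continuousAt.continuousWithinAt))
      · intro x hx
        have hd : HasDerivAt h 0 x := by
          have h1 : HasDerivAt (fun y => f y * Real.exp (B y))
              (((1/2) * α x - β x * f x) * Real.exp (B x)
                + f x * (Real.exp (B x) * β x)) x :=
            (hode x hx.1).mul ((hBderiv x).exp)
          have h2 := h1.sub (hGderiv x)
          exact h2.congr_deriv (by ring)
        exact hd.hasDerivWithinAt
    have h0 : h 0 = 0 := by
      simp [hhdef, hGdef, hf0, intervalIntegral.integral_same]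
    have := hconst v (Set.mem_Icc.mpr ⟨hv, le_refl v⟩)
    rw [h0] at this
    have : f v * Real.exp (B v) - G v = 0 := this
    linarith
  have hfv : f v = ∫ t in (0:ℝ)..v, Real.exp (B t - B v) * ((1/2) * α t) := by
    have hexp : (Real.exp (B v)) ≠ 0 := (Real.exp_pos _).ne'
    have : f v = Real.exp (-(B v)) * G v := by
      rw [← hkey]; rw [Real.exp_neg]; field_simp
    rw [this, hGdef]
    simp only
    rw [← intervalIntegral.integral_const_mul]
    apply intervalIntegral.integral_congr
    intro t _
    simp only [Real.exp_sub, Real.exp_neg]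
    ring
  -- rewrite the difference as an integral
  have hcont1 : Continuous fun t => (Real.exp (B t - B v) - 1) * ((1/2) * α t) := by
    apply Continuous.mul
    · exact ((hBcont.sub continuous_const).rexp).sub continuous_const
    · exact continuous_const.mul hα
  have hdiff : f v - (1/2) * ∫ t in (0:ℝ)..v, α t
      = ∫ t in (0:ℝ)..v, (Real.exp (B t - B v) - 1) * ((1/2) * α t) := by
    rw [hfv]
    rw [← intervalIntegral.integral_const_mul]
    rw [← intervalIntegral.integral_sub (f := fun t => Real.exp (B t - B v) * ((1/2) * α t))
      (g := fun t => (1/2) * α t)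
      ((((hBcont.sub continuous_const).rexp).mul (continuous_const.mul hα)).intervalIntegrable _ _)
      ((continuous_const.mul hα).intervalIntegrable _ _)]
    apply intervalIntegral.integral_congr
    intro t _
    ring
  rw [hdiff]
  -- bound the integral
  have hCnonneg : 0 ≤ Real.exp (2 * ε) - 1 := by
    have := Real.add_one_le_exp (2 * ε)
    linarith
  have hbound : ∀ t ∈ Set.Icc (0:ℝ) v,
      |(Real.exp (B t - B v) - 1) * ((1/2) * α t)|
        ≤ (Real.exp (2 * ε)) * ((1/2) * α t) - (1/2) * α t := by
    intro t ht
    obtain ⟨hmon, hdle⟩ := hBfacts t ht.1 ht.2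
    have hle1 : Real.exp (B t - B v) ≤ 1 := by
      rw [← Real.exp_zero]
      exact Real.exp_le_exp.mpr (by linarith)
    have hge : Real.exp (-ε) ≤ Real.exp (B t - B v) :=
      Real.exp_le_exp.mpr (by linarith)
    have habs : |Real.exp (B t - B v) - 1| ≤ Real.exp (2 * ε) - 1 := by
      rw [abs_sub_comm, abs_of_nonneg (by linarith)]
      have h1 := Real.add_one_le_exp (-ε)
      have h2 := Real.add_one_le_exp (2 * ε)
      linarith
    have hα2 : 0 ≤ (1/2) * α t := by linarith [hαpos t]
    calc |(Real.exp (B t - B v) - 1) * ((1/2) * α t)|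
        = |Real.exp (B t - B v) - 1| * ((1/2) * α t) := by
          rw [abs_mul, abs_of_nonneg hα2]
      _ ≤ (Real.exp (2 * ε) - 1) * ((1/2) * α t) :=
          mul_le_mul_of_nonneg_right habs hα2
      _ = Real.exp (2 * ε) * ((1/2) * α t) - (1/2) * α t := by ring
  have habs_int : |∫ t in (0:ℝ)..v, (Real.exp (B t - B v) - 1) * ((1/2) * α t)|
      ≤ ∫ t in (0:ℝ)..v, |(Real.exp (B t - B v) - 1) * ((1/2) * α t)| :=
    intervalIntegral.abs_integral_le_integral_abs hv
  have hmono : (∫ t in (0:ℝ)..v, |(Real.exp (B t - B v) - 1) * ((1/2) * α t)|)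
      ≤ ∫ t in (0:ℝ)..v, (Real.exp (2 * ε) * ((1/2) * α t) - (1/2) * α t) := by
    apply intervalIntegral.integral_mono_on hv
    · exact (hcont1.abs).intervalIntegrable _ _
    · exact (((continuous_const.mul (continuous_const.mul hα)).sub
        (continuous_const.mul hα))).intervalIntegrable _ _
    · exact hbound
  have hfinal : (∫ t in (0:ℝ)..v, (Real.exp (2 * ε) * ((1/2) * α t) - (1/2) * α t))
      = (Real.exp (2 * ε) - 1) * ((1/2) * ∫ t in (0:ℝ)..v, α t) := by
    rw [intervalIntegral.integral_sub (f := fun t => Real.exp (2 * ε) * ((1/2) * α t))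
      (g := fun t => (1/2) * α t)
      ((continuous_const.mul (continuous_const.mul hα)).intervalIntegrable _ _)
      ((continuous_const.mul hα).intervalIntegrable _ _)]
    rw [intervalIntegral.integral_const_mul, intervalIntegral.integral_const_mul]
    ring
  calc |∫ t in (0:ℝ)..v, (Real.exp (B t - B v) - 1) * ((1/2) * α t)|
      ≤ ∫ t in (0:ℝ)..v, |(Real.exp (B t - B v) - 1) * ((1/2) * α t)| := habs_int
    _ ≤ ∫ t in (0:ℝ)..v, (Real.exp (2 * ε) * ((1/2) * α t) - (1/2) * α t) := hmono
    _ = (Real.exp (2 * ε) - 1) * ((1/2) * ∫ t in (0:ℝ)..v, α t) := hfinal
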